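/- Let A = {1,...,18,20,22,24,25,26,27,30,34,50,54} (the 28-element set of the paper) and B = {1,2,4,3,6,12,5,10,20}. If S ⊆ A is sum-free with |S| = 12, then 2 ≤ |S ∩ B| ≤ 5. -/

import Mathlib

def SumFree (S : Finset ℕ) : Prop := ∀ x ∈ S, ∀ y ∈ S, ∀ z ∈ S, x + y ≠ z

lemma pair_card (S : Finset ℕ) (hsf : SumFree S) (a : ℕ) :
    (S ∩ ({a, 2 * a} : Finset ℕ)).card ≤ 1 := by
  have h : ¬(a ∈ S ∧ 2 * a ∈ S) := fun ⟨h1, h2⟩ => hsf a h1 a h1 (2 * a) h2 (by ring)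
  refine Finset.card_le_one.mpr fun x hx y hy => ?_
  simp only [Finset.mem_inter, Finset.mem_insert, Finset.mem_singleton] at hx hy
  rcases hx.2 with rfl | rfl <;> rcases hy.2 with rfl | rfl
  · rfl
  · exact absurd ⟨hx.1, hy.1⟩ h
  · exact absurd ⟨hy.1, hx.1⟩ h
  · rfl

set_option maxRecDepth 20000 in
lemma upper (T : Finset ℕ) (hT : T ⊆ ({1,2,4,3,6,12,5,10,20} : Finset ℕ))
    (hsf : ∀ x ∈ T, ∀ y ∈ T, ∀ z ∈ T, x + y ≠ z) : T.card ≤ 5 := by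
  have : ∀ T ∈ ({1,2,4,3,6,12,5,10,20} : Finset ℕ).powerset,
      (∀ x ∈ T, ∀ y ∈ T, ∀ z ∈ T, x + y ≠ z) → T.card ≤ 5 := by decide
  exact this T (Finset.mem_powerset.mpr hT) hsf

theorem intersection_with_B (S : Finset ℕ)
    (hS : S ⊆ ({1,2,3,4,5,6,7,8,9,10,11,12,13,14,15,16,17,18,20,22,24,25,26,27,30,34,50,54} : Finset ℕ)) (hsf : SumFree S) (hcard : S.card = 12) :
    2 ≤ (S ∩ ({1,2,4,3,6,12,5,10,20} : Finset ℕ)).card ∧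
    (S ∩ ({1,2,4,3,6,12,5,10,20} : Finset ℕ)).card ≤ 5 := by
  set B : Finset ℕ := {1,2,4,3,6,12,5,10,20} with hB
  refine ⟨?_, upper _ (Finset.inter_subset_right) (fun x hx y hy z hz =>
    hsf x (Finset.mem_inter.mp hx).1 y (Finset.mem_inter.mp hy).1 z (Finset.mem_inter.mp hz).1)⟩
  -- lower bound
  have hsub : S \ B ⊆ (S ∩ {7,14}) ∪ (S ∩ {8,16}) ∪ (S ∩ {9,18}) ∪ (S ∩ {11,22}) ∪
      (S ∩ {13,26}) ∪ (S ∩ {15,30}) ∪ (S ∩ {17,34}) ∪ (S ∩ {25,50}) ∪ (S ∩ {27,54}) ∪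
      (S ∩ {24}) := by
    intro x hx
    have hxA := hS (Finset.mem_sdiff.mp hx).1
    have hxS := (Finset.mem_sdiff.mp hx).1
    have hxB := (Finset.mem_sdiff.mp hx).2
    simp only [hB, Finset.mem_insert, Finset.mem_singleton, Finset.mem_union,
      Finset.mem_inter] at hxA hxB ⊢
    simp only [hxS, true_and]
    omega
  have h24 : (S ∩ ({24} : Finset ℕ)).card ≤ 1 :=
    le_trans (Finset.card_le_card Finset.inter_subset_right) (by simp)
  have hp : ∀ a : ℕ, (S ∩ ({a, 2 * a} : Finset ℕ)).card ≤ 1 := pair_card S hsf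
  have hcards : (S \ B).card ≤ 10 := by
    calc (S \ B).card ≤ _ := Finset.card_le_card hsub
    _ ≤ 10 := by
      refine le_trans (Finset.card_union_le _ _) ?_
      refine le_trans (add_le_add (Finset.card_union_le _ _) h24) ?_
      refine le_trans (add_le_add_left (add_le_add (Finset.card_union_le _ _) (hp 27)) _) ?_
      refine le_trans (add_le_add_left (add_le_add_left (add_le_add (Finset.card_union_le _ _) (hp 25)) _) _) ?_
      refine le_trans (add_le_add_left (add_le_add_left (add_le_add_left (add_le_add (Finset.card_union_le _ _) (hp 17)) _) _) _) ?_
      refine le_trans (add_le_add_left (add_le_add_left (add_le_add_left (add_le_add_left (add_le_add (Finset.card_union_le _ _) (hp 15)) _) _) _) _) ?_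
      refine le_trans (add_le_add_left (add_le_add_left (add_le_add_left (add_le_add_left (add_le_add_left (add_le_add (Finset.card_union_le _ _) (hp 13)) _) _) _) _) _) ?_
      refine le_trans (add_le_add_left (add_le_add_left (add_le_add_left (add_le_add_left (add_le_add_left (add_le_add_left (add_le_add (Finset.card_union_le _ _) (hp 11)) _) _) _) _) _) _) ?_
      refine le_trans (add_le_add_left (add_le_add_left (add_le_add_left (add_le_add_left (add_le_add_left (add_le_add_left (add_le_add_left (add_le_add (Finset.card_union_le _ _) (hp 9)) _) _) _) _) _) _) _) ?_
      refine le_trans (add_le_add_left (add_le_add_left (add_le_add_left (add_le_add_left (add_le_add_left (add_le_add_left (add_le_add_left (add_le_add_left (add_le_add (hp 7) (hp 8)) _) _) _) _) _) _) _) _) ?_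
      norm_num
  have := Finset.card_sdiff_add_card_inter S B
  omega
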